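/- arXiv:2506.06615 — 2 statements merged into one kernel-verified Lean document; each statement's English description precedes it below -/
import Mathlib

section
/- Suppose that for every directed edge (j,i) of a finite directed graph the degree ratio condition N^out/N^in = |N^in_i|/|N^out_j| holds, where N^out and N^in are the numbers of units with positive out-degree and positive in-degree respectively. Then for every assignment of real pairwise spillover effects τ_{i,j} to the edges, the outward spillover effect equals the inward spillover effect: τ^out = τ^in. -/
open Finset

/-- Out-neighbors of `j` in the directed graph `A` (where `A j i` means an edge `j → i`). -/
def Nout {V : Type*} [Fintype V] (A : V → V → Prop) [DecidableRel A] (j : V) : Finset V :=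
  Finset.univ.filter (fun i => A j i)

/-- In-neighbors of `i`. -/
def Nin {V : Type*} [Fintype V] (A : V → V → Prop) [DecidableRel A] (i : V) : Finset V :=
  Finset.univ.filter (fun j => A j i)

/-- Units with at least one out-neighbor. -/
def senders {V : Type*} [Fintype V] (A : V → V → Prop) [DecidableRel A] : Finset V :=
  Finset.univ.filter (fun j => (Nout A j).Nonempty)

/-- Units with at least one in-neighbor. -/
def receivers {V : Type*} [Fintype V] (A : V → V → Prop) [DecidableRel A] : Finset V :=
  Finset.univ.filter (fun i => (Nin A i).Nonempty)

/-- Outward spillover effect: average over senders of the mean pairwise effect on out-neighbors. -/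
noncomputable def tauOut {V : Type*} [Fintype V] (A : V → V → Prop) [DecidableRel A]
    (τ : V → V → ℝ) : ℝ :=
  (((senders A).card : ℝ))⁻¹ *
    ∑ j ∈ senders A, (((Nout A j).card : ℝ))⁻¹ * ∑ i ∈ Nout A j, τ i j

/-- Inward spillover effect: average over receivers of the mean pairwise effect from in-neighbors. -/
noncomputable def tauIn {V : Type*} [Fintype V] (A : V → V → Prop) [DecidableRel A]
    (τ : V → V → ℝ) : ℝ :=
  (((receivers A).card : ℝ))⁻¹ *
    ∑ i ∈ receivers A, (((Nin A i).card : ℝ))⁻¹ * ∑ j ∈ Nin A i, τ i j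

/-- if for every directed edge `(j,i)` the degree-ratio condition
`N^out/N^in = |N^in_i|/|N^out_j|` holds, then for every assignment of pairwise spillover
effects the outward and inward spillover effects coincide. -/
theorem stmt4 {V : Type*} [Fintype V] (A : V → V → Prop) [DecidableRel A]
    (hout : 0 < (senders A).card) (hin : 0 < (receivers A).card)
    (hratio : ∀ j i, A j i →
      ((senders A).card : ℝ) / ((receivers A).card : ℝ)
        = ((Nin A i).card : ℝ) / ((Nout A j).card : ℝ)) :
    ∀ τ : V → V → ℝ, tauOut A τ = tauIn A τ := by
  intro τ
  have hOut : tauOut A τ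
      = ∑ j ∈ Finset.univ, ∑ i ∈ Nout A j,
          ((senders A).card : ℝ)⁻¹ * ((Nout A j).card : ℝ)⁻¹ * τ i j := by
    rw [tauOut, Finset.mul_sum]
    rw [Finset.sum_subset (Finset.subset_univ (senders A))]
    · refine Finset.sum_congr rfl fun j _ => ?_
      simp only [Finset.mul_sum]
      exact Finset.sum_congr rfl fun i _ => by ring
    · intro j _ hj
      have : ¬ (Nout A j).Nonempty := by
        simpa [senders] using hj
      rw [Finset.not_nonempty_iff_eq_empty] at this
      simp [this]
  have hIn : tauIn A τ
      = ∑ i ∈ Finset.univ, ∑ j ∈ Nin A i,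
          ((receivers A).card : ℝ)⁻¹ * ((Nin A i).card : ℝ)⁻¹ * τ i j := by
    rw [tauIn, Finset.mul_sum]
    rw [Finset.sum_subset (Finset.subset_univ (receivers A))]
    · refine Finset.sum_congr rfl fun i _ => ?_
      simp only [Finset.mul_sum]
      exact Finset.sum_congr rfl fun j _ => by ring
    · intro i _ hi
      have : ¬ (Nin A i).Nonempty := by
        simpa [receivers] using hi
      rw [Finset.not_nonempty_iff_eq_empty] at this
      simp [this]
  rw [hOut, hIn]
  rw [Finset.sum_comm' (fun j i => by
    simp [Nout, Nin] : ∀ j i, j ∈ Finset.univ ∧ i ∈ Nout A j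
      ↔ j ∈ Nin A i ∧ i ∈ Finset.univ)]
  refine Finset.sum_congr rfl fun i _ => Finset.sum_congr rfl fun j hj => ?_
  have hA : A j i := by simpa [Nin] using hj
  have h1 : 0 < ((Nout A j).card : ℝ) := by
    have : i ∈ Nout A j := by simp [Nout, hA]
    exact_mod_cast Finset.card_pos.mpr ⟨i, this⟩
  have h2 : 0 < ((Nin A i).card : ℝ) := by
    exact_mod_cast Finset.card_pos.mpr ⟨j, hj⟩
  have h3 : 0 < ((senders A).card : ℝ) := by exact_mod_cast hout
  have h4 : 0 < ((receivers A).card : ℝ) := by exact_mod_cast hin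
  have hr := hratio j i hA
  have key : ((senders A).card : ℝ)⁻¹ * ((Nout A j).card : ℝ)⁻¹
      = ((receivers A).card : ℝ)⁻¹ * ((Nin A i).card : ℝ)⁻¹ := by
    field_simp at hr ⊢
    linarith
  rw [key]
end

section
/- Conservative variance bound for the outward spillover Horvitz–Thompson estimator: under overlap, the clustered structure (potential outcomes in cluster k depend only on treatments in cluster k, and treatments are assigned independently across clusters), Var(τ̂^out) ≤ V^c := (1/(N^out)²)·Σ_k Σ_{j∈N^out_k} |N^out_k|·E[V_{1j}² + V_{0j}²], where V_{zj} = W_j(Z)·1{Z_j=z}·Ȳ^out_j(Z), N^out_k is the set of units in cluster k with positive out-degree, and N^out = Σ_k |N^out_k|. -/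
open Finset

/-- Expectation on a finite probability space. -/
noncomputable def pexp {Ω : Type*} [Fintype Ω] (p : Ω → ℝ) (f : Ω → ℝ) : ℝ :=
  ∑ ω, p ω * f ω

/-- Variance on a finite probability space. -/
noncomputable def pvar {Ω : Type*} [Fintype Ω] (p : Ω → ℝ) (f : Ω → ℝ) : ℝ :=
  pexp p (fun ω => (f ω - pexp p f) ^ 2)

/-- Average observed outcome among the out-neighbors of `j`. -/
noncomputable def Ybarout {V : Type*} [Fintype V] (A : V → V → Prop) [DecidableRel A]
    (Y : V → (V → Bool) → ℝ) (j : V) (z : V → Bool) : ℝ :=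
  (((Nout A j).card : ℝ))⁻¹ * ∑ i ∈ Nout A j, Y i z

/-- `V_{zj}` : the weighted observed mean outcome of `j`'s out-neighbors when `Z_j = b`. -/
noncomputable def Vterm {V : Type*} [Fintype V] (A : V → V → Prop) [DecidableRel A]
    (W : V → (V → Bool) → ℝ) (Y : V → (V → Bool) → ℝ) (b : Bool) (j : V)
    (z : V → Bool) : ℝ :=
  W j z * (if z j = b then 1 else 0) * Ybarout A Y j z

section aux
variable {Ω : Type*} [Fintype Ω] (p : Ω → ℝ)

lemma pexp_congr {f g : Ω → ℝ} (h : ∀ ω, f ω = g ω) : pexp p f = pexp p g := by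
  unfold pexp; exact Finset.sum_congr rfl fun ω _ => by rw [h]

lemma pexp_sum {ι : Type*} (s : Finset ι) (f : ι → Ω → ℝ) :
    pexp p (fun ω => ∑ i ∈ s, f i ω) = ∑ i ∈ s, pexp p (f i) := by
  unfold pexp
  rw [Finset.sum_comm]
  exact Finset.sum_congr rfl fun ω _ => by rw [Finset.mul_sum]

lemma pexp_const_mul (c : ℝ) (f : Ω → ℝ) :
    pexp p (fun ω => c * f ω) = c * pexp p f := by
  unfold pexp
  rw [Finset.mul_sum]
  exact Finset.sum_congr rfl fun ω _ => by ring

lemma pexp_mono (hp : ∀ ω, 0 ≤ p ω) {f g : Ω → ℝ} (h : ∀ ω, f ω ≤ g ω) :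
    pexp p f ≤ pexp p g :=
  Finset.sum_le_sum fun ω _ => mul_le_mul_of_nonneg_left (h ω) (hp ω)

lemma pvar_const_mul (c : ℝ) (f : Ω → ℝ) :
    pvar p (fun ω => c * f ω) = c ^ 2 * pvar p f := by
  unfold pvar
  rw [pexp_const_mul]
  have h : ∀ ω, (c * f ω - c * pexp p f) ^ 2 = c ^ 2 * (f ω - pexp p f) ^ 2 :=
    fun ω => by ring
  rw [pexp_congr p h, pexp_const_mul]

lemma pexp_bilin (a b : ℝ) (f h : Ω → ℝ) :
    pexp p (fun ω => (f ω - a) * (h ω - b))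
      = pexp p (fun ω => f ω * h ω) - b * pexp p f - a * pexp p h
        + a * b * ∑ ω, p ω := by
  unfold pexp
  simp only [Finset.mul_sum, ← Finset.sum_sub_distrib, ← Finset.sum_add_distrib]
  exact Finset.sum_congr rfl fun ω _ => by ring

lemma var_sum_le {K : Type*} [Fintype K]
    (hp : ∀ ω, 0 ≤ p ω) (h1 : ∑ ω, p ω = 1) (g : K → Ω → ℝ)
    (hind : ∀ k k', k ≠ k' →
      pexp p (fun ω => g k ω * g k' ω) = pexp p (g k) * pexp p (g k')) :
    pvar p (fun ω => ∑ k, g k ω) ≤ ∑ k, pexp p (fun ω => g k ω ^ 2) := by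
  have hcross : ∀ k k', k ≠ k' →
      pexp p (fun ω => (g k ω - pexp p (g k)) * (g k' ω - pexp p (g k'))) = 0 := by
    intro k k' hkk
    rw [pexp_bilin p (pexp p (g k)) (pexp p (g k')) (g k) (g k'), h1, hind k k' hkk]
    ring
  have hdiag : ∀ k, pexp p (fun ω => (g k ω - pexp p (g k)) ^ 2)
      ≤ pexp p (fun ω => g k ω ^ 2) := by
    intro k
    have e0 : pexp p (fun ω => (g k ω - pexp p (g k)) ^ 2)
        = pexp p (fun ω => (g k ω - pexp p (g k)) * (g k ω - pexp p (g k))) :=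
      pexp_congr p fun ω => by ring
    have e1 : pexp p (fun ω => g k ω * g k ω) = pexp p (fun ω => g k ω ^ 2) :=
      pexp_congr p fun ω => by ring
    rw [e0, pexp_bilin p (pexp p (g k)) (pexp p (g k)) (g k) (g k), h1, e1]
    nlinarith [sq_nonneg (pexp p (g k))]
  have e1 : ∀ ω, ((∑ k, g k ω) - pexp p (fun ω => ∑ k, g k ω)) ^ 2
      = ∑ k, ∑ k', (g k ω - pexp p (g k)) * (g k' ω - pexp p (g k')) := by
    intro ω
    rw [pexp_sum, ← Finset.sum_sub_distrib, sq, Finset.sum_mul_sum]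
  have e2 : pvar p (fun ω => ∑ k, g k ω)
      = ∑ k, ∑ k', pexp p (fun ω => (g k ω - pexp p (g k)) * (g k' ω - pexp p (g k'))) := by
    unfold pvar
    rw [pexp_congr p e1, pexp_sum]
    exact Finset.sum_congr rfl fun k _ => by rw [pexp_sum]
  rw [e2]
  apply Finset.sum_le_sum
  intro k _
  have : ∑ k', pexp p (fun ω => (g k ω - pexp p (g k)) * (g k' ω - pexp p (g k')))
      = pexp p (fun ω => (g k ω - pexp p (g k)) * (g k ω - pexp p (g k))) :=
    Finset.sum_eq_single_of_mem k (Finset.mem_univ k)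
      (fun k' _ hk' => hcross k k' (Ne.symm hk'))
  rw [this]
  calc pexp p (fun ω => (g k ω - pexp p (g k)) * (g k ω - pexp p (g k)))
      = pexp p (fun ω => (g k ω - pexp p (g k)) ^ 2) :=
        pexp_congr p fun ω => by ring
    _ ≤ _ := hdiag k

end aux


lemma indep_local {V K : Type*} [Fintype V] [DecidableEq V] [Fintype K] [DecidableEq K]
    (cl : V → K) (pk : K → (V → Bool) → ℝ)
    (hpkloc : ∀ k z z', (∀ v, cl v = k → z v = z' v) → pk k z = pk k z')
    (Pβ : (V → Bool) → ℝ) (hPβ : ∀ z, Pβ z = ∏ k, pk k z)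
    (hβ1 : ∑ z : V → Bool, Pβ z = 1)
    {k k' : K} (hkk : k ≠ k')
    (φ ψ : (V → Bool) → ℝ)
    (hφ : ∀ z z', (∀ v, cl v = k → z v = z' v) → φ z = φ z')
    (hψ : ∀ z z', (∀ v, cl v = k' → z v = z' v) → ψ z = ψ z') :
    pexp Pβ (fun z => φ z * ψ z) = pexp Pβ φ * pexp Pβ ψ := by
  classical
  set m : (V → Bool) → (V → Bool) → (V → Bool) :=
    fun z w v => if cl v = k then z v else w v with hm
  have hmk : ∀ z w v, cl v = k → m z w v = z v := fun z w v hv => if_pos hv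
  have hmk' : ∀ z w v, cl v ≠ k → m z w v = w v := fun z w v hv => if_neg hv
  have hinv : ∀ z w : V → Bool, m (m z w) (m w z) = z := by
    intro z w; funext v
    by_cases hv : cl v = k
    · rw [hmk _ _ _ hv, hmk _ _ _ hv]
    · rw [hmk' _ _ _ hv, hmk' _ _ _ hv]
  have hP : ∀ z w, Pβ (m z w) * Pβ (m w z) = Pβ z * Pβ w := by
    intro z w
    rw [hPβ, hPβ, hPβ, hPβ, ← Finset.prod_mul_distrib, ← Finset.prod_mul_distrib]
    apply Finset.prod_congr rfl
    intro k'' _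
    by_cases hk : k'' = k
    · subst hk
      rw [hpkloc k'' (m z w) z (fun v hv => hmk z w v hv),
          hpkloc k'' (m w z) w (fun v hv => hmk w z v hv)]
    · rw [hpkloc k'' (m z w) w (fun v hv => hmk' z w v (by rw [hv]; exact hk)),
          hpkloc k'' (m w z) z (fun v hv => hmk' w z v (by rw [hv]; exact hk))]
      ring
  have hφm : ∀ z w, φ (m z w) = φ z := fun z w => hφ _ _ (fun v hv => hmk z w v hv)
  have hψm : ∀ z w, ψ (m w z) = ψ z := fun z w =>
    hψ _ _ (fun v hv => hmk' w z v (by rw [hv]; exact fun h => hkk h.symm))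
  have key : (∑ zw : (V → Bool) × (V → Bool), Pβ zw.1 * Pβ zw.2 * (φ zw.1 * ψ zw.2))
      = ∑ zw : (V → Bool) × (V → Bool), Pβ zw.1 * Pβ zw.2 * (φ zw.1 * ψ zw.1) := by
    rw [← Equiv.sum_comp
      (⟨fun zw => (m zw.1 zw.2, m zw.2 zw.1),
        fun zw => (m zw.1 zw.2, m zw.2 zw.1),
        fun zw => Prod.ext (hinv zw.1 zw.2) (hinv zw.2 zw.1),
        fun zw => Prod.ext (hinv zw.1 zw.2) (hinv zw.2 zw.1)⟩ :
        ((V → Bool) × (V → Bool)) ≃ ((V → Bool) × (V → Bool)))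
      (fun zw : (V → Bool) × (V → Bool) => Pβ zw.1 * Pβ zw.2 * (φ zw.1 * ψ zw.2))]
    apply Fintype.sum_congr
    intro zw
    simp only [Equiv.coe_fn_mk]
    rw [hP, hφm, hψm]
  have h1 : (∑ zw : (V → Bool) × (V → Bool), Pβ zw.1 * Pβ zw.2 * (φ zw.1 * ψ zw.2))
      = pexp Pβ φ * pexp Pβ ψ := by
    rw [Fintype.sum_prod_type]
    unfold pexp
    rw [Finset.sum_mul_sum]
    exact Finset.sum_congr rfl fun z _ => Finset.sum_congr rfl fun w _ => by ring
  have h2 : (∑ zw : (V → Bool) × (V → Bool), Pβ zw.1 * Pβ zw.2 * (φ zw.1 * ψ zw.1))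
      = pexp Pβ (fun z => φ z * ψ z) := by
    rw [Fintype.sum_prod_type]
    unfold pexp
    have : ∀ z : V → Bool,
        (∑ w : V → Bool, Pβ z * Pβ w * (φ z * ψ z)) = Pβ z * (φ z * ψ z) := by
      intro z
      rw [show (∑ w : V → Bool, Pβ z * Pβ w * (φ z * ψ z))
          = (∑ w : V → Bool, Pβ w) * (Pβ z * (φ z * ψ z)) by
        rw [Finset.sum_mul]; exact Finset.sum_congr rfl fun w _ => by ring, hβ1, one_mul]
    exact Finset.sum_congr rfl fun z _ => this z
  rw [← h1, key, h2]


/-- conservative variance bound for the outward spillover Horvitz–Thompson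
estimator.  Under overlap, partial interference (outcomes depend only on the treatments of
their own cluster), within-cluster edges, and treatments assigned independently across
clusters (the realized law `P_β` factorizes into nonnegative cluster-local factors `pk`):
`Var(τ̂^out) ≤ V^c = (1/(N^out)²)·Σ_k Σ_{j∈N^out_k} |N^out_k|·E[V_{1j}² + V_{0j}²]`. -/
theorem stmt14 {V K : Type*} [Fintype V] [DecidableEq V] [Fintype K] [DecidableEq K]
    (A : V → V → Prop) [DecidableRel A] (cl : V → K)
    (hwithin : ∀ j i, A j i → cl i = cl j)
    (Y : V → (V → Bool) → ℝ)
    (hPI : ∀ i z z', (∀ v, cl v = cl i → z v = z' v) → Y i z = Y i z')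
    (pk αk : K → (V → Bool) → ℝ)
    (hpk0 : ∀ k z, 0 ≤ pk k z) (hαk0 : ∀ k z, 0 ≤ αk k z)
    (hpkloc : ∀ k z z', (∀ v, cl v = k → z v = z' v) → pk k z = pk k z')
    (hαkloc : ∀ k z z', (∀ v, cl v = k → z v = z' v) → αk k z = αk k z')
    (Pβ : (V → Bool) → ℝ) (hPβ : ∀ z, Pβ z = ∏ k, pk k z)
    (hβ1 : ∑ z : V → Bool, Pβ z = 1)
    (overlap : ∀ k z, 0 < αk k z → 0 < pk k z)
    (W : V → (V → Bool) → ℝ)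
    (hW : ∀ j z, W j z =
      if 0 < pk (cl j) z then
        (αk (cl j) (Function.update z j true) + αk (cl j) (Function.update z j false))
          / pk (cl j) z
      else 0)
    (hNout : 0 < (senders A).card) :
    pvar Pβ (fun z => (((senders A).card : ℝ))⁻¹ *
        ∑ j ∈ senders A, (Vterm A W Y true j z - Vterm A W Y false j z))
      ≤ ((((senders A).card : ℝ)) ^ 2)⁻¹ *
          ∑ k : K, ∑ j ∈ (senders A).filter (fun j' => cl j' = k),
            ((((senders A).filter (fun j' => cl j' = k)).card : ℝ)) *
              pexp Pβ (fun z =>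
                (Vterm A W Y true j z) ^ 2 + (Vterm A W Y false j z) ^ 2) := by
  classical
  have hp0 : ∀ z, 0 ≤ Pβ z := fun z => by
    rw [hPβ]; exact Finset.prod_nonneg fun k _ => hpk0 k z
  -- locality of Vterm
  have hVloc : ∀ (b : Bool) j z z', (∀ v, cl v = cl j → z v = z' v) →
      Vterm A W Y b j z = Vterm A W Y b j z' := by
    intro b j z z' hag
    unfold Vterm Ybarout
    have hWj : W j z = W j z' := by
      rw [hW, hW, hpkloc (cl j) z z' hag]
      have hα : ∀ c : Bool, αk (cl j) (Function.update z j c)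
          = αk (cl j) (Function.update z' j c) := by
        intro c
        apply hαkloc
        intro v hv
        by_cases hvj : v = j
        · subst hvj; simp
        · simp [Function.update_of_ne hvj, hag v hv]
      rw [hα true, hα false]
    have hzj : z j = z' j := hag j rfl
    have hY : ∑ i ∈ Nout A j, Y i z = ∑ i ∈ Nout A j, Y i z' := by
      apply Finset.sum_congr rfl
      intro i hi
      have hA : A j i := by simpa [Nout] using hi
      exact hPI i z z' fun v hv => hag v (hv.trans (hwithin j i hA))
    rw [hWj, hzj, hY]
  -- locality of cluster sums
  have hDloc : ∀ (k : K) z z', (∀ v, cl v = k → z v = z' v) →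
      (∑ j ∈ (senders A).filter (fun j' => cl j' = k),
        (Vterm A W Y true j z - Vterm A W Y false j z))
      = ∑ j ∈ (senders A).filter (fun j' => cl j' = k),
        (Vterm A W Y true j z' - Vterm A W Y false j z') := by
    intro k z z' hag
    apply Finset.sum_congr rfl
    intro j hj
    have hjk : cl j = k := (Finset.mem_filter.mp hj).2
    have hag' : ∀ v, cl v = cl j → z v = z' v := fun v hv => hag v (hv.trans hjk)
    rw [hVloc true j z z' hag', hVloc false j z z' hag']
  -- independence across clusters
  have hind : ∀ k k', k ≠ k' →
      pexp Pβ (fun z => (∑ j ∈ (senders A).filter (fun j' => cl j' = k),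
          (Vterm A W Y true j z - Vterm A W Y false j z)) *
        (∑ j ∈ (senders A).filter (fun j' => cl j' = k'),
          (Vterm A W Y true j z - Vterm A W Y false j z)))
      = pexp Pβ (fun z => ∑ j ∈ (senders A).filter (fun j' => cl j' = k),
          (Vterm A W Y true j z - Vterm A W Y false j z)) *
        pexp Pβ (fun z => ∑ j ∈ (senders A).filter (fun j' => cl j' = k'),
          (Vterm A W Y true j z - Vterm A W Y false j z)) := by
    intro k k' hkk
    exact indep_local cl pk hpkloc Pβ hPβ hβ1 hkk _ _ (hDloc k) (hDloc k')
  have key := var_sum_le Pβ hp0 hβ1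
    (fun k z => ∑ j ∈ (senders A).filter (fun j' => cl j' = k),
      (Vterm A W Y true j z - Vterm A W Y false j z)) hind
  -- rewrite the LHS
  have hfib : (fun z => (((senders A).card : ℝ))⁻¹ *
      ∑ j ∈ senders A, (Vterm A W Y true j z - Vterm A W Y false j z))
      = fun z => (((senders A).card : ℝ))⁻¹ *
        ∑ k : K, ∑ j ∈ (senders A).filter (fun j' => cl j' = k),
          (Vterm A W Y true j z - Vterm A W Y false j z) := by
    funext z
    rw [Finset.sum_fiberwise (senders A) cl
      (fun j => Vterm A W Y true j z - Vterm A W Y false j z)]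
  rw [hfib, pvar_const_mul]
  -- the per-cluster bound
  have hperk : ∀ k : K,
      pexp Pβ (fun z => (∑ j ∈ (senders A).filter (fun j' => cl j' = k),
          (Vterm A W Y true j z - Vterm A W Y false j z)) ^ 2)
      ≤ ∑ j ∈ (senders A).filter (fun j' => cl j' = k),
          ((((senders A).filter (fun j' => cl j' = k)).card : ℝ)) *
            pexp Pβ (fun z =>
              (Vterm A W Y true j z) ^ 2 + (Vterm A W Y false j z) ^ 2) := by
    intro k
    have hcs : pexp Pβ (fun z => (∑ j ∈ (senders A).filter (fun j' => cl j' = k),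
          (Vterm A W Y true j z - Vterm A W Y false j z)) ^ 2)
        ≤ pexp Pβ (fun z => ((((senders A).filter (fun j' => cl j' = k)).card : ℝ)) *
            ∑ j ∈ (senders A).filter (fun j' => cl j' = k),
              (Vterm A W Y true j z - Vterm A W Y false j z) ^ 2) :=
      pexp_mono Pβ hp0 fun z => sq_sum_le_card_mul_sum_sq
    have hsq : ∀ j z, (Vterm A W Y true j z - Vterm A W Y false j z) ^ 2
        = (Vterm A W Y true j z) ^ 2 + (Vterm A W Y false j z) ^ 2 := by
      intro j z
      have h0 : Vterm A W Y true j z * Vterm A W Y false j z = 0 := by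
        unfold Vterm
        cases hz : z j <;> simp [hz]
      nlinarith [h0]
    calc pexp Pβ (fun z => (∑ j ∈ (senders A).filter (fun j' => cl j' = k),
          (Vterm A W Y true j z - Vterm A W Y false j z)) ^ 2)
        ≤ pexp Pβ (fun z => ((((senders A).filter (fun j' => cl j' = k)).card : ℝ)) *
            ∑ j ∈ (senders A).filter (fun j' => cl j' = k),
              (Vterm A W Y true j z - Vterm A W Y false j z) ^ 2) := hcs
      _ = ((((senders A).filter (fun j' => cl j' = k)).card : ℝ)) *
            ∑ j ∈ (senders A).filter (fun j' => cl j' = k),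
              pexp Pβ (fun z => (Vterm A W Y true j z - Vterm A W Y false j z) ^ 2) := by
          rw [pexp_const_mul, pexp_sum]
      _ = ∑ j ∈ (senders A).filter (fun j' => cl j' = k),
            ((((senders A).filter (fun j' => cl j' = k)).card : ℝ)) *
              pexp Pβ (fun z =>
                (Vterm A W Y true j z) ^ 2 + (Vterm A W Y false j z) ^ 2) := by
          rw [Finset.mul_sum]
          exact Finset.sum_congr rfl fun j _ => by
            rw [pexp_congr Pβ fun z => hsq j z]
  calc ((((senders A).card : ℝ))⁻¹) ^ 2 *
        pvar Pβ (fun z => ∑ k : K, ∑ j ∈ (senders A).filter (fun j' => cl j' = k),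
          (Vterm A W Y true j z - Vterm A W Y false j z))
      ≤ ((((senders A).card : ℝ))⁻¹) ^ 2 *
          ∑ k : K, ∑ j ∈ (senders A).filter (fun j' => cl j' = k),
            ((((senders A).filter (fun j' => cl j' = k)).card : ℝ)) *
              pexp Pβ (fun z =>
                (Vterm A W Y true j z) ^ 2 + (Vterm A W Y false j z) ^ 2) := by
        apply mul_le_mul_of_nonneg_left _ (sq_nonneg _)
        exact key.trans (Finset.sum_le_sum fun k _ => hperk k)
    _ = ((((senders A).card : ℝ)) ^ 2)⁻¹ *
          ∑ k : K, ∑ j ∈ (senders A).filter (fun j' => cl j' = k),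
            ((((senders A).filter (fun j' => cl j' = k)).card : ℝ)) *
              pexp Pβ (fun z =>
                (Vterm A W Y true j z) ^ 2 + (Vterm A W Y false j z) ^ 2) := by
        rw [inv_pow]
end
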